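/- Define ζ_CB(s; z) := Σ_{m=1}^∞ (2z)^{2m}/(binom(2m,m)·m^s). For every integer n ≥ −1 and real z with 0 < z < 1, ζ_CB(−n; z) = z/(2^n(1−z²)^{n+3/2}) · ( z√(1−z²)·p_n(z²) + arcsin(z)·q_n(z²) ), where p_n, q_n are Lehmer's polynomials defined by p_{−1}=0, q_{−1}=1, p_{n+1}(x) = 2(nx+1)p_n(x)+2x(1−x)p_n'(x)+q_n(x), q_{n+1}(x) = (2(n+1)x+1)q_n(x)+2x(1−x)q_n'(x). -/

import Mathlib

open Polynomial

/-- Lehmer's polynomials `q_n` for `n ≥ -1`, indexed so that `lehmerQ (n+1) = q_n`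
(`lehmerQ 0 = q_{-1} = 1`), with recurrence
`q_{n+1}(x) = (2(n+1)x + 1) q_n(x) + 2x(1-x) q_n'(x)`. -/
noncomputable def lehmerQ : ℕ → Polynomial ℤ
  | 0 => 1
  | (k + 1) => (C (2 * (k : ℤ)) * X + 1) * lehmerQ k
      + 2 * X * (1 - X) * derivative (lehmerQ k)

/-- Lehmer's polynomials `p_n` for `n ≥ -1`, indexed so that `lehmerP (n+1) = p_n`
(`lehmerP 0 = p_{-1} = 0`), with recurrence
`p_{n+1}(x) = 2(nx + 1) p_n(x) + 2x(1-x) p_n'(x) + q_n(x)`. -/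
noncomputable def lehmerP : ℕ → Polynomial ℤ
  | 0 => 0
  | (k + 1) => 2 * (C ((k : ℤ) - 1) * X + 1) * lehmerP k
      + 2 * X * (1 - X) * derivative (lehmerP k) + lehmerQ k

namespace ZetaCB

/-- The general term of the series. -/
noncomputable def term (j : ℤ) (m : ℕ) (y : ℝ) : ℝ :=
  (2 * y) ^ (2 * (m + 1)) * ((m : ℝ) + 1) ^ j / (Nat.choose (2 * (m + 1)) (m + 1) : ℝ)

/-- The series. -/
noncomputable def T (j : ℤ) (z : ℝ) : ℝ := ∑' m : ℕ, term j m z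

/-- Derivative of the general term. -/
noncomputable def dterm (j : ℤ) (m : ℕ) (y : ℝ) : ℝ :=
  (2 * (m + 1) : ℕ) * (2 * y) ^ (2 * (m + 1) - 1) * 2 * ((m : ℝ) + 1) ^ j /
    (Nat.choose (2 * (m + 1)) (m + 1) : ℝ)

/-- The closed form. -/
noncomputable def G (k : ℕ) (z : ℝ) : ℝ :=
  2 ^ (1 - (k : ℤ)) * ((1 - z ^ 2) ^ (-(k : ℤ)) *
    (z ^ 2 * aeval (z ^ 2) (lehmerP k) +
      z * Real.arcsin z * aeval (z ^ 2) (lehmerQ k) / Real.sqrt (1 - z ^ 2)))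

lemma cb_eq (m : ℕ) : (Nat.choose (2 * (m + 1)) (m + 1) : ℝ) = (Nat.centralBinom (m + 1) : ℝ) := rfl

lemma cb_pos (m : ℕ) : (0 : ℝ) < (Nat.choose (2 * (m + 1)) (m + 1) : ℝ) := by
  rw [cb_eq]; exact_mod_cast Nat.centralBinom_pos (m + 1)

lemma four_pow_le (m : ℕ) :
    (4 : ℝ) ^ (m + 1) ≤ 2 * ((m : ℝ) + 1) * (Nat.choose (2 * (m + 1)) (m + 1) : ℝ) := by
  rw [cb_eq]
  have := Nat.four_pow_le_two_mul_self_mul_centralBinom (m + 1) (Nat.succ_pos m)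
  exact_mod_cast this

lemma zpow_le_toNat {x : ℝ} (hx : 1 ≤ x) (j : ℤ) : x ^ j ≤ x ^ j.toNat := by
  calc x ^ j ≤ x ^ (j.toNat : ℤ) := zpow_le_zpow_right₀ hx (Int.self_le_toNat j)
  _ = x ^ j.toNat := zpow_natCast x j.toNat

lemma summable_aux (K : ℕ) {r : ℝ} (h0 : 0 ≤ r) (hr : r < 1) :
    Summable (fun m : ℕ => ((m : ℝ) + 1) ^ K * r ^ (m + 1)) := by
  have h : Summable (fun n : ℕ => (n : ℝ) ^ K * r ^ n) := by
    apply summable_pow_mul_geometric_of_norm_lt_one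
    rw [Real.norm_eq_abs, abs_of_nonneg h0]; exact hr
  have := (summable_nat_add_iff 1).2 h
  refine this.congr fun m => ?_
  push_cast; ring

lemma term_bound (j : ℤ) {b : ℝ} (hb0 : 0 ≤ b) (m : ℕ) {y : ℝ} (hy : |y| ≤ b) :
    |term j m y| ≤ 2 * ((m : ℝ) + 1) ^ (j.toNat + 1) * (b ^ 2) ^ (m + 1) := by
  have hm1 : (1:ℝ) ≤ (m : ℝ) + 1 := by
    have : (0:ℝ) ≤ (m:ℝ) := Nat.cast_nonneg m; linarith
  have hcb := cb_pos m
  have h4 := four_pow_le m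
  have hzp : ((m : ℝ) + 1) ^ j ≤ ((m : ℝ) + 1) ^ j.toNat := zpow_le_toNat hm1 j
  have hzp0 : (0:ℝ) < ((m : ℝ) + 1) ^ j := zpow_pos (by linarith) j
  have habs : |term j m y| = |2 * y| ^ (2 * (m + 1)) * ((m : ℝ) + 1) ^ j /
      (Nat.choose (2 * (m + 1)) (m + 1) : ℝ) := by
    unfold term
    rw [abs_div, abs_mul, abs_pow, abs_of_pos hzp0, abs_of_pos hcb]
  have h2yb : |2 * y| ≤ 2 * b := by
    rw [abs_mul]; simpa using mul_le_mul_of_nonneg_left hy (by norm_num : (0:ℝ) ≤ 2)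
  have key : |2 * y| ^ (2 * (m + 1)) ≤ 4 ^ (m + 1) * (b ^ 2) ^ (m + 1) := by
    rw [pow_mul, ← mul_pow]
    apply pow_le_pow_left₀ (by positivity)
    nlinarith [abs_nonneg (2 * y)]
  rw [habs, div_le_iff₀ hcb]
  calc |2 * y| ^ (2 * (m + 1)) * ((m : ℝ) + 1) ^ j
      ≤ (4 ^ (m + 1) * (b ^ 2) ^ (m + 1)) * ((m : ℝ) + 1) ^ j.toNat :=
        mul_le_mul key hzp (le_of_lt hzp0) (by positivity)
    _ = (b ^ 2) ^ (m + 1) * ((m : ℝ) + 1) ^ j.toNat * 4 ^ (m + 1) := by ring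
    _ ≤ (b ^ 2) ^ (m + 1) * ((m : ℝ) + 1) ^ j.toNat *
        (2 * ((m : ℝ) + 1) * (Nat.choose (2 * (m + 1)) (m + 1) : ℝ)) := by
        apply mul_le_mul_of_nonneg_left h4 (by positivity)
    _ = 2 * ((m : ℝ) + 1) ^ (j.toNat + 1) * (b ^ 2) ^ (m + 1) *
        (Nat.choose (2 * (m + 1)) (m + 1) : ℝ) := by ring

lemma dterm_bound (j : ℤ) {b : ℝ} (hb0 : 0 < b) (hb1 : b ≤ 1) (m : ℕ) {y : ℝ} (hy : |y| ≤ b) :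
    |dterm j m y| ≤ (8 / b) * (((m : ℝ) + 1) ^ (j.toNat + 2) * (b ^ 2) ^ (m + 1)) := by
  have hm1 : (1:ℝ) ≤ (m : ℝ) + 1 := by
    have : (0:ℝ) ≤ (m:ℝ) := Nat.cast_nonneg m; linarith
  have hcb := cb_pos m
  have h4 := four_pow_le m
  have hzp : ((m : ℝ) + 1) ^ j ≤ ((m : ℝ) + 1) ^ j.toNat := zpow_le_toNat hm1 j
  have hzp0 : (0:ℝ) < ((m : ℝ) + 1) ^ j := zpow_pos (by linarith) j
  have hsub : 2 * (m + 1) - 1 = 2 * m + 1 := by omega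
  have habs : |dterm j m y| = (2 * ((m:ℝ) + 1)) * |2 * y| ^ (2 * m + 1) * 2 *
      ((m : ℝ) + 1) ^ j / (Nat.choose (2 * (m + 1)) (m + 1) : ℝ) := by
    unfold dterm
    rw [hsub, abs_div, abs_mul, abs_mul, abs_mul, abs_pow, abs_of_pos hzp0, abs_of_pos hcb]
    push_cast
    rw [abs_of_nonneg (by positivity : (0:ℝ) ≤ 2 * ((m:ℝ)+1))]
    norm_num
  have h2yb : |2 * y| ≤ 2 * b := by
    rw [abs_mul]; simpa using mul_le_mul_of_nonneg_left hy (by norm_num : (0:ℝ) ≤ 2)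
  have key : |2 * y| ^ (2 * m + 1) ≤ (2 * b) * (4 ^ m * (b ^ 2) ^ m) := by
    calc |2 * y| ^ (2 * m + 1) ≤ (2 * b) ^ (2 * m + 1) :=
          pow_le_pow_left₀ (abs_nonneg _) h2yb _
      _ = (2 * b) * ((2 * b) ^ 2) ^ m := by rw [pow_succ', pow_mul]
      _ = (2 * b) * (4 ^ m * (b ^ 2) ^ m) := by
          have h : (2 * b) ^ 2 = 4 * b ^ 2 := by ring
          rw [h, mul_pow]
  have h4m : (4:ℝ) ^ m ≤ ((m:ℝ) + 1) * (Nat.choose (2 * (m + 1)) (m + 1) : ℝ) := by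
    have : (4:ℝ) ^ (m+1) = 4 * 4 ^ m := by ring
    nlinarith [pow_pos (by norm_num : (0:ℝ) < 4) m]
  rw [habs, div_le_iff₀ hcb]
  have hrw : (8 / b) * (((m : ℝ) + 1) ^ (j.toNat + 2) * (b ^ 2) ^ (m + 1)) *
      (Nat.choose (2 * (m + 1)) (m + 1) : ℝ) =
      8 * b * (((m : ℝ) + 1) ^ (j.toNat + 2) * (b ^ 2) ^ m) *
      (Nat.choose (2 * (m + 1)) (m + 1) : ℝ) := by
    field_simp
    ring
  rw [hrw]
  calc 2 * ((m:ℝ) + 1) * |2 * y| ^ (2 * m + 1) * 2 * ((m : ℝ) + 1) ^ j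
      ≤ 2 * ((m:ℝ) + 1) * ((2 * b) * (4 ^ m * (b ^ 2) ^ m)) * 2 * ((m : ℝ) + 1) ^ j.toNat := by
        have e1 : (0:ℝ) ≤ 2 * ((m:ℝ)+1) := by positivity
        have := mul_le_mul key hzp (le_of_lt hzp0) (by positivity : (0:ℝ) ≤ (2*b) * (4 ^ m * (b ^ 2) ^ m))
        nlinarith [pow_nonneg (abs_nonneg (2*y)) (2*m+1), hzp0.le]
    _ = (8 * b * ((m:ℝ)+1) * ((m : ℝ) + 1) ^ j.toNat * (b^2)^m) * (4 ^ m) := by ring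
    _ ≤ (8 * b * ((m:ℝ)+1) * ((m : ℝ) + 1) ^ j.toNat * (b^2)^m) *
        (((m:ℝ) + 1) * (Nat.choose (2 * (m + 1)) (m + 1) : ℝ)) := by
        apply mul_le_mul_of_nonneg_left h4m (by positivity)
    _ = 8 * b * (((m : ℝ) + 1) ^ (j.toNat + 2) * (b ^ 2) ^ m) *
        (Nat.choose (2 * (m + 1)) (m + 1) : ℝ) := by ring

lemma summable_term (j : ℤ) {z : ℝ} (hz : |z| < 1) : Summable (fun m => term j m z) := by
  have hz0 : (0:ℝ) ≤ |z| := abs_nonneg z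
  have hsq : |z| ^ 2 < 1 := by nlinarith
  have h : Summable (fun m : ℕ => 2 * (((m : ℝ) + 1) ^ (j.toNat + 1) * (|z| ^ 2) ^ (m + 1))) :=
    (summable_aux (j.toNat + 1) (by positivity) hsq).mul_left 2
  apply Summable.of_norm_bounded h
  intro m
  rw [Real.norm_eq_abs]
  calc |term j m z| ≤ 2 * ((m : ℝ) + 1) ^ (j.toNat + 1) * (|z| ^ 2) ^ (m + 1) :=
        term_bound j hz0 m (le_refl |z|)
    _ = 2 * (((m : ℝ) + 1) ^ (j.toNat + 1) * (|z| ^ 2) ^ (m + 1)) := by ring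

lemma hasDerivAt_term (j : ℤ) (m : ℕ) (y : ℝ) :
    HasDerivAt (term j m) (dterm j m y) y := by
  have h1 : HasDerivAt (fun y : ℝ => 2 * y) 2 y := by
    simpa using (hasDerivAt_id y).const_mul (2:ℝ)
  have h2 := ((h1.pow (2 * (m + 1))).mul_const (((m : ℝ) + 1) ^ j)).div_const
    ((Nat.choose (2 * (m + 1)) (m + 1) : ℝ))
  exact h2

lemma summable_dterm (j : ℤ) {z : ℝ} (h0 : 0 < z) (h1 : z < 1) :
    Summable (fun m => dterm j m z) := by
  have hz : |z| = z := abs_of_pos h0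
  have hsq : z ^ 2 < 1 := by nlinarith
  have h : Summable (fun m : ℕ => (8 / z) * (((m : ℝ) + 1) ^ (j.toNat + 2) * (z ^ 2) ^ (m + 1))) :=
    (summable_aux (j.toNat + 2) (by positivity) hsq).mul_left _
  apply Summable.of_norm_bounded h
  intro m
  rw [Real.norm_eq_abs]
  exact dterm_bound j h0 h1.le m (le_of_eq hz)

lemma hasDerivAt_T (j : ℤ) {z : ℝ} (h0 : 0 < z) (h1 : z < 1) :
    HasDerivAt (T j) (∑' m, dterm j m z) z := by
  set b := (z + 1) / 2 with hb
  have hb0 : 0 < b := by rw [hb]; linarith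
  have hb1 : b < 1 := by rw [hb]; linarith
  have hzb : z < b := by rw [hb]; linarith
  have hbb : b ^ 2 < 1 := by nlinarith
  have hu : Summable (fun m : ℕ =>
      (8 / b) * (((m : ℝ) + 1) ^ (j.toNat + 2) * (b ^ 2) ^ (m + 1))) :=
    (summable_aux (j.toNat + 2) (by positivity) hbb).mul_left _
  have hmem : z ∈ Set.Ioo (-b) b := ⟨by linarith, hzb⟩
  exact hasDerivAt_tsum_of_isPreconnected hu isOpen_Ioo (convex_Ioo (-b) b).isPreconnected
    (fun m y _ => hasDerivAt_term j m y)
    (fun m y hy => by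
      rw [Real.norm_eq_abs]
      exact dterm_bound j hb0 hb1.le m (abs_lt.2 ⟨hy.1, hy.2⟩).le)
    hmem (summable_term j (by rw [abs_of_pos h0]; exact h1)) hmem


lemma cb_rec (m : ℕ) : ((m : ℝ) + 2) * (Nat.choose (2 * (m + 2)) (m + 2) : ℝ) =
    2 * (2 * (m : ℝ) + 3) * (Nat.choose (2 * (m + 1)) (m + 1) : ℝ) := by
  have h := Nat.succ_mul_centralBinom_succ (m + 1)
  rw [cb_eq, cb_eq]
  have h2 : ((m + 2 : ℕ) : ℝ) * (Nat.centralBinom (m + 2) : ℝ) =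
      (2 : ℝ) * ((2 * (m + 1) + 1 : ℕ) : ℝ) * (Nat.centralBinom (m + 1) : ℝ) := by
    exact_mod_cast congrArg (Nat.cast : ℕ → ℝ) h
  push_cast at h2 ⊢
  convert h2 using 2 <;> push_cast <;> ring_nf

/-- The recurrence between consecutive terms of the `j = -1` series. -/
lemma term_rec {z : ℝ} (m : ℕ) :
    (2 * (m : ℝ) + 3) * term (-1) (m + 1) z = 2 * ((m : ℝ) + 1) * z ^ 2 * term (-1) m z := by
  have hcb1 := cb_pos m
  have hcb2 := cb_pos (m + 1)
  have hrec := cb_rec m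
  unfold term
  simp only [show m + 1 + 1 = m + 2 from rfl] at hcb2 ⊢
  have hp : (2 * z) ^ (2 * (m + 2)) = (2 * z) ^ (2 * (m + 1)) * (2 * z) ^ 2 := by
    rw [show 2 * (m + 2) = 2 * (m + 1) + 2 from by ring, pow_add]
  rw [hp]
  have hm1 : ((m : ℝ) + 1) ≠ 0 := by positivity
  have hm2 : ((m : ℝ) + 2) ≠ 0 := by positivity
  have hz1 : ((m : ℝ) + 1) ^ (-1 : ℤ) = ((m:ℝ) + 1)⁻¹ := by rw [zpow_neg, zpow_one]
  have hz2 : ((m : ℝ) + 1 + 1) ^ (-1 : ℤ) = ((m:ℝ) + 1 + 1)⁻¹ := by rw [zpow_neg, zpow_one]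
  rw [hz1]
  push_cast
  rw [hz2]
  field_simp
  linear_combination (-(4 * z ^ 4 * (2 * z) ^ (2 * m))) * hrec

lemma term_zero_eq {z : ℝ} (m : ℕ) : term 0 m z = ((m : ℝ) + 1) * term (-1) m z := by
  unfold term
  have hm1 : ((m:ℝ) + 1) ≠ 0 := by positivity
  have hz1 : ((m : ℝ) + 1) ^ (-1 : ℤ) = ((m:ℝ) + 1)⁻¹ := by rw [zpow_neg, zpow_one]
  rw [zpow_zero, hz1]
  field_simp

/-- The key telescoping identity. -/
lemma two_mul_sub {z : ℝ} (hz : |z| < 1) :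
    2 * (1 - z ^ 2) * T 0 z - T (-1) z = 2 * z ^ 2 := by
  have hs0 := summable_term 0 hz
  have hsm := summable_term (-1) hz
  set d : ℕ → ℝ := fun m => (2 * (m : ℝ) + 1) * term (-1) m z with hd
  have hdsum : Summable d := by
    have h2 : Summable (fun m => 2 * term 0 m z - term (-1) m z) := (hs0.mul_left 2).sub hsm
    apply h2.congr
    intro m
    rw [hd]
    linear_combination (2 : ℝ) * term_zero_eq (z := z) m
  have hterm : ∀ m : ℕ, 2 * (1 - z ^ 2) * term 0 m z - term (-1) m z
      = d m - d (m + 1) := by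
    intro m
    have hr := term_rec (z := z) m
    have h0m := term_zero_eq (z := z) m
    rw [hd]
    push_cast
    linear_combination (2 - 2 * z ^ 2) * h0m + hr
  have htel : ∑' m, (d m - d (m + 1)) = d 0 := by
    have h1 : Summable (fun m => d (m + 1)) := (summable_nat_add_iff 1).2 hdsum
    rw [Summable.tsum_sub hdsum h1, Summable.tsum_eq_zero_add hdsum]
    ring
  have hleft : 2 * (1 - z ^ 2) * T 0 z - T (-1) z
      = ∑' m, (2 * (1 - z ^ 2) * term 0 m z - term (-1) m z) := by
    rw [Summable.tsum_sub (hs0.mul_left _) hsm, tsum_mul_left]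
    rfl
  rw [hleft, tsum_congr hterm, htel]
  have h0 : d 0 = 2 * z ^ 2 := by
    simp only [hd]
    unfold term
    norm_num [Nat.choose]
    ring
  rw [h0]

lemma constancy {f : ℝ → ℝ} (hf : ∀ x ∈ Set.Ioo (0:ℝ) 1, HasDerivAt f 0 x)
    (hlim : Filter.Tendsto f (nhdsWithin 0 (Set.Ioi 0)) (nhds 0)) :
    ∀ x ∈ Set.Ioo (0:ℝ) 1, f x = 0 := by
  intro x hx
  have hconst : ∀ ε ∈ Set.Ioo (0:ℝ) x, f x = f ε := by
    intro ε hε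
    have h1 : ContinuousOn f (Set.Icc ε x) := by
      intro y hy
      exact ((hf y ⟨lt_of_lt_of_le hε.1 hy.1, lt_of_le_of_lt hy.2 hx.2⟩).continuousAt).continuousWithinAt
    have h2 : ∀ y ∈ Set.Ico ε x, HasDerivWithinAt f 0 (Set.Ici y) y := fun y hy =>
      (hf y ⟨lt_of_lt_of_le hε.1 hy.1, lt_trans hy.2 hx.2⟩).hasDerivWithinAt
    exact constant_of_has_deriv_right_zero h1 h2 x (Set.right_mem_Icc.2 hε.2.le)
  have hev : ∀ᶠ ε in nhdsWithin 0 (Set.Ioi 0), f ε = f x := by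
    filter_upwards [Ioo_mem_nhdsGT_of_mem (⟨le_rfl, hx.1⟩ : (0:ℝ) ∈ Set.Ico 0 x)] with ε hε
    exact (hconst ε hε).symm
  have hc : Filter.Tendsto (fun _ : ℝ => f x) (nhdsWithin 0 (Set.Ioi 0)) (nhds 0) :=
    Filter.Tendsto.congr' hev hlim
  exact (tendsto_nhds_unique tendsto_const_nhds hc)

lemma T_nonneg (j : ℤ) (y : ℝ) : 0 ≤ T j y := by
  apply tsum_nonneg
  intro m
  unfold term
  have h1 : (0:ℝ) ≤ (2 * y) ^ (2 * (m + 1)) := by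
    rw [pow_mul]
    positivity
  have h2 : (0:ℝ) < ((m:ℝ) + 1) ^ (-1 + (j + 1) : ℤ) := zpow_pos (by positivity) _
  have h2' : (0:ℝ) < ((m:ℝ) + 1) ^ j := by
    rw [show (-1 + (j + 1) : ℤ) = j from by ring] at h2
    exact h2
  positivity

lemma T_le_geom {j : ℤ} (hj : j ≤ 0) {y : ℝ} (h0 : 0 < y) (hy : y ≤ 1 / 4) :
    T j y ≤ 6 * y ^ 2 := by
  have hr : (0:ℝ) ≤ 4 * y ^ 2 := by positivity
  have hr1 : 4 * y ^ 2 ≤ 1 / 4 := by nlinarith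
  have hsum : Summable (fun m : ℕ => (4 * y ^ 2) ^ (m + 1)) := by
    apply Summable.comp_injective (summable_geometric_of_lt_one hr (by linarith))
    exact add_left_injective 1
  have hy1 : |y| < 1 := by rw [abs_of_pos h0]; linarith
  have hle : ∀ m : ℕ, term j m y ≤ (4 * y ^ 2) ^ (m + 1) := by
    intro m
    unfold term
    have hcb : (1:ℝ) ≤ (Nat.choose (2 * (m + 1)) (m + 1) : ℝ) := by
      rw [cb_eq]; exact_mod_cast Nat.centralBinom_pos (m + 1)
    have hm1 : ((m:ℝ) + 1) ^ j ≤ 1 := by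
      apply zpow_le_one_of_nonpos₀ (by push_cast; linarith [Nat.cast_nonneg (α := ℝ) m]) hj
    have hp : (2 * y) ^ (2 * (m + 1)) = (4 * y ^ 2) ^ (m + 1) := by
      rw [pow_mul]
      congr 1
      ring
    rw [hp]
    have hpos : (0:ℝ) ≤ (4 * y ^ 2) ^ (m + 1) := by positivity
    have hzp : (0:ℝ) < ((m:ℝ) + 1) ^ j := zpow_pos (by positivity) _
    calc (4 * y ^ 2) ^ (m + 1) * ((m:ℝ) + 1) ^ j / (Nat.choose (2 * (m + 1)) (m + 1) : ℝ)
        ≤ (4 * y ^ 2) ^ (m + 1) * 1 / 1 := by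
          apply div_le_div_of_nonneg_left ?_ ?_ hcb |>.trans ?_
          · positivity
          · norm_num
          · rw [div_one]
            nlinarith
      _ = (4 * y ^ 2) ^ (m + 1) := by ring
  have := Summable.tsum_le_tsum hle (summable_term j hy1) hsum
  refine this.trans ?_
  have : ∑' m : ℕ, (4 * y ^ 2) ^ (m + 1) = (4 * y ^ 2) * (1 - 4 * y ^ 2)⁻¹ := by
    calc ∑' m : ℕ, (4 * y ^ 2) ^ (m + 1) = ∑' m : ℕ, (4 * y ^ 2) * (4 * y ^ 2) ^ m := by
          apply tsum_congr
          intro m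
          rw [pow_succ']
      _ = (4 * y ^ 2) * ∑' m : ℕ, (4 * y ^ 2) ^ m := tsum_mul_left
      _ = (4 * y ^ 2) * (1 - 4 * y ^ 2)⁻¹ := by rw [tsum_geometric_of_lt_one hr (by linarith)]
  rw [this]
  have h34 : (1:ℝ) - 4 * y ^ 2 ≥ 3 / 4 := by nlinarith
  have hinv : (1 - 4 * y ^ 2)⁻¹ ≤ (3 / 4 : ℝ)⁻¹ := by
    apply inv_anti₀ (by norm_num) h34
  calc (4 * y ^ 2) * (1 - 4 * y ^ 2)⁻¹ ≤ (4 * y ^ 2) * (3 / 4 : ℝ)⁻¹ := by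
        apply mul_le_mul_of_nonneg_left hinv (by positivity)
    _ ≤ 6 * y ^ 2 := by nlinarith

/-- Derivative series of `T (-1)` sums to `(2/x) * T 0`. -/
lemma dtsum_neg_one {x : ℝ} (hx : x ≠ 0) :
    ∑' m, dterm (-1) m x = 2 / x * T 0 x := by
  rw [show T 0 x = ∑' m, term 0 m x from rfl, ← tsum_mul_left]
  apply tsum_congr
  intro m
  unfold dterm term
  have hcb := cb_pos m
  have hm1 : ((m:ℝ) + 1) ≠ 0 := by positivity
  have hz1 : ((m : ℝ) + 1) ^ (-1 : ℤ) = ((m:ℝ) + 1)⁻¹ := by rw [zpow_neg, zpow_one]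
  rw [hz1, zpow_zero]
  have hp : (2 * x) ^ (2 * (m + 1) - 1) * (2 * x) = (2 * x) ^ (2 * (m + 1)) := by
    rw [← pow_succ, show 2 * (m + 1) - 1 + 1 = 2 * (m + 1) from by omega]
  rw [← hp]
  push_cast
  field_simp

lemma base {z : ℝ} (h0 : 0 < z) (h1 : z < 1) : T (-1) z = G 0 z := by
  set ψ : ℝ → ℝ := fun y => T (-1) y * Real.sqrt (1 - y ^ 2) / y - 2 * Real.arcsin y with hψ
  have hzero : ∀ x ∈ Set.Ioo (0:ℝ) 1, ψ x = 0 := by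
    apply constancy
    · intro x hx
      obtain ⟨hx0, hx1⟩ := hx
      have hw : (0:ℝ) < 1 - x ^ 2 := by nlinarith
      have hs : (0:ℝ) < Real.sqrt (1 - x ^ 2) := Real.sqrt_pos.2 hw
      have hs2 : Real.sqrt (1 - x ^ 2) ^ 2 = 1 - x ^ 2 := Real.sq_sqrt hw.le
      have hT' : HasDerivAt (T (-1)) (2 / x * T 0 x) x := by
        have := hasDerivAt_T (-1) hx0 hx1
        rwa [dtsum_neg_one hx0.ne'] at this
      have hquad : HasDerivAt (fun y : ℝ => 1 - y ^ 2) (-(2 * x)) x := by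
        simpa using ((hasDerivAt_pow 2 x).const_sub 1)
      have hsqrt : HasDerivAt (fun y : ℝ => Real.sqrt (1 - y ^ 2))
          (-x / Real.sqrt (1 - x ^ 2)) x := by
        have := (Real.hasDerivAt_sqrt hw.ne').comp x hquad
        rw [show -x / Real.sqrt (1 - x ^ 2) = 1 / (2 * Real.sqrt (1 - x ^ 2)) * -(2 * x) by ring]
        exact this
      have harc : HasDerivAt Real.arcsin (1 / Real.sqrt (1 - x ^ 2)) x :=
        Real.hasDerivAt_arcsin (by linarith) (by linarith)
      have hd : HasDerivAt ψ
          (((2 / x * T 0 x * Real.sqrt (1 - x ^ 2) +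
              T (-1) x * (-x / Real.sqrt (1 - x ^ 2))) * x - T (-1) x * Real.sqrt (1 - x ^ 2) * 1) / x ^ 2
            - 2 * (1 / Real.sqrt (1 - x ^ 2))) x := by
        exact ((hT'.mul hsqrt).div (hasDerivAt_id x) hx0.ne').sub (harc.const_mul 2)
      have hkey : T (-1) x = 2 * (1 - x ^ 2) * T 0 x - 2 * x ^ 2 := by
        have := two_mul_sub (z := x) (by rw [abs_of_pos hx0]; exact hx1)
        linarith
      have hE : ((2 / x * T 0 x * Real.sqrt (1 - x ^ 2) +
              T (-1) x * (-x / Real.sqrt (1 - x ^ 2))) * x - T (-1) x * Real.sqrt (1 - x ^ 2) * 1) / x ^ 2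
            - 2 * (1 / Real.sqrt (1 - x ^ 2)) = 0 := by
        rw [hkey]
        field_simp
        linear_combination (2 * (T 0 x + 1) * x ^ 2) * hs2
      rw [hE] at hd
      exact hd
    · have h2 : Filter.Tendsto (fun y : ℝ => 2 * Real.arcsin y) (nhdsWithin 0 (Set.Ioi 0)) (nhds 0) := by
        have : Filter.Tendsto (fun y : ℝ => 2 * Real.arcsin y) (nhds 0) (nhds 0) := by
          have := (Real.continuous_arcsin.tendsto 0).const_mul (2:ℝ)
          simpa using this
        exact this.mono_left nhdsWithin_le_nhds
      have h1 : Filter.Tendsto (fun y : ℝ => T (-1) y * Real.sqrt (1 - y ^ 2) / y)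
          (nhdsWithin 0 (Set.Ioi 0)) (nhds 0) := by
        have hub : ∀ᶠ y in nhdsWithin 0 (Set.Ioi 0),
            T (-1) y * Real.sqrt (1 - y ^ 2) / y ≤ 6 * y := by
          filter_upwards [Ioo_mem_nhdsGT_of_mem
            (⟨le_rfl, by norm_num⟩ : (0:ℝ) ∈ Set.Ico 0 (1/4))] with y hy
          obtain ⟨hy0, hy14⟩ := hy
          have hT6 : T (-1) y ≤ 6 * y ^ 2 := T_le_geom (by norm_num) hy0 hy14.le
          have hs1 : Real.sqrt (1 - y ^ 2) ≤ 1 := Real.sqrt_le_one.2 (by nlinarith)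
          rw [div_le_iff₀ hy0]
          have hTnn := T_nonneg (-1) y
          have hsnn : (0:ℝ) ≤ Real.sqrt (1 - y ^ 2) := Real.sqrt_nonneg _
          nlinarith
        have hlb : ∀ᶠ y in nhdsWithin 0 (Set.Ioi 0),
            0 ≤ T (-1) y * Real.sqrt (1 - y ^ 2) / y := by
          filter_upwards [self_mem_nhdsWithin] with y hy
          exact div_nonneg (mul_nonneg (T_nonneg _ _) (Real.sqrt_nonneg _)) (le_of_lt hy)
        have h6 : Filter.Tendsto (fun y : ℝ => 6 * y) (nhdsWithin 0 (Set.Ioi 0)) (nhds 0) := by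
          have : Filter.Tendsto (fun y : ℝ => 6 * y) (nhds 0) (nhds 0) := by
            simpa using (continuous_id.tendsto (0:ℝ)).const_mul (6:ℝ)
          exact this.mono_left nhdsWithin_le_nhds
        exact tendsto_of_tendsto_of_tendsto_of_le_of_le' tendsto_const_nhds h6 hlb hub
      have := h1.sub h2
      simpa using this
  have hψz := hzero z ⟨h0, h1⟩
  rw [hψ] at hψz
  simp only at hψz
  have hw : (0:ℝ) < 1 - z ^ 2 := by nlinarith
  have hs : (0:ℝ) < Real.sqrt (1 - z ^ 2) := Real.sqrt_pos.2 hw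
  have hG : G 0 z = 2 * (z * Real.arcsin z / Real.sqrt (1 - z ^ 2)) := by
    unfold G
    simp [lehmerP, lehmerQ]
  rw [hG]
  have : T (-1) z * Real.sqrt (1 - z ^ 2) / z = 2 * Real.arcsin z := by linarith
  field_simp at this ⊢
  nlinarith [this, Real.sq_sqrt hw.le, hs, h0]

lemma hasDerivAt_aeval_sq (p : Polynomial ℤ) (x : ℝ) :
    HasDerivAt (fun y : ℝ => (aeval (y ^ 2) p : ℝ))
      ((aeval (x ^ 2) (derivative p) : ℝ) * (2 * x)) x := by
  have h1 : HasDerivAt (fun y : ℝ => y ^ 2) (2 * x) x := by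
    simpa using hasDerivAt_pow 2 x
  exact (Polynomial.hasDerivAt_aeval (q := p) (x ^ 2)).comp x h1

lemma step (k : ℕ) (ih : ∀ y ∈ Set.Ioo (0:ℝ) 1, T ((k:ℤ) - 1) y = G k y)
    {z : ℝ} (h0 : 0 < z) (h1 : z < 1) : T (((k:ℤ) + 1) - 1) z = G (k + 1) z := by
  have hw : (0:ℝ) < 1 - z ^ 2 := by nlinarith
  have hs : (0:ℝ) < Real.sqrt (1 - z ^ 2) := Real.sqrt_pos.2 hw
  have hs2 : Real.sqrt (1 - z ^ 2) ^ 2 = 1 - z ^ 2 := Real.sq_sqrt hw.le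
  -- derivative of G k
  have hP := hasDerivAt_aeval_sq (lehmerP k) z
  have hQ := hasDerivAt_aeval_sq (lehmerQ k) z
  have hy2 : HasDerivAt (fun y : ℝ => y ^ 2) (2 * z) z := by
    simpa using hasDerivAt_pow 2 z
  have h1' := hy2.mul hP
  have harc : HasDerivAt Real.arcsin (1 / Real.sqrt (1 - z ^ 2)) z :=
    Real.hasDerivAt_arcsin (by linarith) (by linarith)
  have h2' := (hasDerivAt_id z).mul harc
  have h3' := h2'.mul hQ
  have hquad : HasDerivAt (fun y : ℝ => 1 - y ^ 2) (-(2 * z)) z := by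
    simpa using ((hasDerivAt_pow 2 z).const_sub 1)
  have hsqrt : HasDerivAt (fun y : ℝ => Real.sqrt (1 - y ^ 2))
      (1 / (2 * Real.sqrt (1 - z ^ 2)) * -(2 * z)) z :=
    (Real.hasDerivAt_sqrt hw.ne').comp z hquad
  have h4' := h3'.div hsqrt hs.ne'
  have h5' := h1'.add h4'
  have hzpow : HasDerivAt (fun y : ℝ => (1 - y ^ 2) ^ (-(k:ℤ)))
      (((-(k:ℤ)) * (1 - z ^ 2) ^ (-(k:ℤ) - 1)) * -(2 * z)) z := by
    have h := (hasDerivAt_zpow (-(k:ℤ)) (1 - z ^ 2) (Or.inl hw.ne')).comp z hquad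
    rw [Int.cast_neg] at h
    exact h
  have h6' := hzpow.mul h5'
  have h7' := h6'.const_mul ((2:ℝ) ^ (1 - (k:ℤ)))
  have hGd : HasDerivAt (G k) ((2:ℝ) ^ (1 - (k:ℤ)) *
      ((((-(k:ℤ)) * (1 - z ^ 2) ^ (-(k:ℤ) - 1)) * -(2 * z)) *
          (z ^ 2 * aeval (z ^ 2) (lehmerP k) +
            z * Real.arcsin z * aeval (z ^ 2) (lehmerQ k) / Real.sqrt (1 - z ^ 2)) +
        (1 - z ^ 2) ^ (-(k:ℤ)) *
          ((2 * z * aeval (z ^ 2) (lehmerP k) +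
              z ^ 2 * (aeval (z ^ 2) (derivative (lehmerP k)) * (2 * z))) +
            (((1 * Real.arcsin z + z * (1 / Real.sqrt (1 - z ^ 2))) * aeval (z ^ 2) (lehmerQ k) +
                z * Real.arcsin z * (aeval (z ^ 2) (derivative (lehmerQ k)) * (2 * z))) *
                  Real.sqrt (1 - z ^ 2) -
              z * Real.arcsin z * aeval (z ^ 2) (lehmerQ k) *
                (1 / (2 * Real.sqrt (1 - z ^ 2)) * -(2 * z))) /
              Real.sqrt (1 - z ^ 2) ^ 2))) z := h7'
  -- transfer to T
  have hev : T ((k:ℤ) - 1) =ᶠ[nhds z] G k := by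
    filter_upwards [isOpen_Ioo.mem_nhds (⟨h0, h1⟩ : z ∈ Set.Ioo (0:ℝ) 1)] with y hy
    exact ih y hy
  have hTd' : HasDerivAt (T ((k:ℤ) - 1)) _ z := hGd.congr_of_eventuallyEq hev
  have hTd := hasDerivAt_T ((k:ℤ) - 1) h0 h1
  have hED := hTd.unique hTd'
  -- express T (k+1-1) via the derivative series
  have hterm : ∀ m : ℕ, term ((k:ℤ) + 1 - 1) m z = z / 2 * dterm ((k:ℤ) - 1) m z := by
    intro m
    unfold term dterm
    have hcb := cb_pos m
    have hm1 : ((m:ℝ) + 1) ≠ 0 := by positivity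
    have hzz : ((m:ℝ) + 1) ^ ((k:ℤ) - 1) = ((m:ℝ) + 1) ^ (k:ℤ) * ((m:ℝ) + 1)⁻¹ :=
      zpow_sub_one₀ hm1 _
    have hp : (2 * z) ^ (2 * (m + 1) - 1) * (2 * z) = (2 * z) ^ (2 * (m + 1)) := by
      rw [← pow_succ, show 2 * (m + 1) - 1 + 1 = 2 * (m + 1) from by omega]
    rw [show (k:ℤ) + 1 - 1 = (k:ℤ) from by ring, hzz, ← hp]
    push_cast
    field_simp
  have hT1 : T ((k:ℤ) + 1 - 1) z = z / 2 * ∑' m, dterm ((k:ℤ) - 1) m z := by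
    rw [show T ((k:ℤ) + 1 - 1) z = ∑' m, term ((k:ℤ) + 1 - 1) m z from rfl, ← tsum_mul_left]
    exact tsum_congr hterm
  rw [hT1, hED]
  -- now the closed-form algebra
  unfold G
  simp only [lehmerP, lehmerQ, map_add, map_mul, map_sub, map_one, map_ofNat, aeval_X, aeval_C]
  push_cast
  set P := (aeval (z ^ 2) (lehmerP k) : ℝ) with hPdef
  set P' := (aeval (z ^ 2) (derivative (lehmerP k)) : ℝ) with hP'def
  set Q := (aeval (z ^ 2) (lehmerQ k) : ℝ) with hQdef
  set Q' := (aeval (z ^ 2) (derivative (lehmerQ k)) : ℝ) with hQ'def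
  set s := Real.sqrt (1 - z ^ 2) with hsdef
  set A := Real.arcsin z with hAdef
  have h2a : (2:ℝ) ^ (1 - (k:ℤ)) = 2 * 2 ^ (-(k:ℤ)) := by
    rw [show (1 - (k:ℤ)) = -(k:ℤ) + 1 from by ring, zpow_add_one₀ (two_ne_zero)]
    ring
  have h2b : (2:ℝ) ^ (1 - ((k:ℤ) + 1)) = 2 ^ (-(k:ℤ)) := by
    congr 1
    ring
  have h2c : (1 - z ^ 2) ^ (-(k:ℤ)) = (1 - z ^ 2) ^ (-(k:ℤ) - 1) * (1 - z ^ 2) := by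
    rw [← zpow_add_one₀ hw.ne']
    congr 1
    ring
  have h2d : (1 - z ^ 2) ^ (-((k:ℤ) + 1)) = (1 - z ^ 2) ^ (-(k:ℤ) - 1) := by
    congr 1
    ring
  rw [h2a, h2b, h2c, h2d]
  rw [← hs2]
  set W := (s ^ 2) ^ (-(k:ℤ) - 1) with hWdef
  set c2 := (2:ℝ) ^ (-(k:ℤ)) with hc2def
  field_simp
  linear_combination (c2 * W * (2 * z * P * s + A * Q)) * hs2
lemma key (k : ℕ) : ∀ z ∈ Set.Ioo (0:ℝ) 1, T ((k:ℤ) - 1) z = G k z := by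
  induction k with
  | zero => intro z hz; simpa using base hz.1 hz.2
  | succ k ih =>
      intro z hz
      have := step k ih hz.1 hz.2
      simpa [add_sub_cancel_right] using this

end ZetaCB

theorem zetaCB_neg_integer (n : ℤ) (hn : -1 ≤ n) (z : ℝ) (hz0 : 0 < z) (hz1 : z < 1) :
    ∑' m : ℕ, (2 * z) ^ (2 * (m + 1)) * ((m : ℝ) + 1) ^ n /
        (Nat.choose (2 * (m + 1)) (m + 1) : ℝ) =
      z / ((2 : ℝ) ^ n * (1 - z ^ 2) ^ ((n : ℝ) + 3 / 2)) *
        (z * Real.sqrt (1 - z ^ 2) * aeval (z ^ 2) (lehmerP (n + 1).toNat) +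
          Real.arcsin z * aeval (z ^ 2) (lehmerQ (n + 1).toNat)) := by
  have hw : (0:ℝ) < 1 - z ^ 2 := by nlinarith
  have hs : (0:ℝ) < Real.sqrt (1 - z ^ 2) := Real.sqrt_pos.2 hw
  set k := (n + 1).toNat with hkdef
  have hk : (k : ℤ) = n + 1 := Int.toNat_of_nonneg (by linarith)
  have hkey := ZetaCB.key k z ⟨hz0, hz1⟩
  have hn' : (k : ℤ) - 1 = n := by omega
  rw [hn'] at hkey
  have hTn : (∑' m : ℕ, (2 * z) ^ (2 * (m + 1)) * ((m : ℝ) + 1) ^ n /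
      (Nat.choose (2 * (m + 1)) (m + 1) : ℝ)) = ZetaCB.T n z := rfl
  rw [hTn, hkey]
  unfold ZetaCB.G
  rw [hk]
  have hrpow : (1 - z ^ 2) ^ ((n:ℝ) + 3 / 2) =
      (1 - z ^ 2) ^ ((n + 1 : ℤ)) * Real.sqrt (1 - z ^ 2) := by
    rw [Real.sqrt_eq_rpow, ← Real.rpow_intCast (1 - z ^ 2) (n + 1), ← Real.rpow_add hw]
    congr 1
    push_cast
    ring
  rw [hrpow]
  rw [show (1 : ℤ) - (n + 1) = -n from by ring, show -((n:ℤ) + 1) = -(n + 1) from rfl]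
  rw [zpow_neg, zpow_neg]
  have hB : ((2:ℝ) ^ n) ≠ 0 := zpow_ne_zero n two_ne_zero
  have hV : ((1 - z ^ 2) ^ (n + 1 : ℤ)) ≠ 0 := zpow_ne_zero _ hw.ne'
  field_simp
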